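/- arXiv:2402.13624 — 5 statements merged into one kernel-verified Lean document; each statement's English description precedes it below -/
import Mathlib

section
/- Let D = (A,B,λ) be an extremally matched temporal bi-clique with injective labeling λ and n = |A| = |B|, and let c ∈ (0,1]. If there is a c-steep edge e ∈ A⊗B, then |In(e) ∩ Out(e)| ≥ 2cn. -/
/-!
Formalization framework for temporal graphs, temporal paths, spanners,
bi-spanners, and related notions from the paper on temporal spanners of
temporal cliques and bi-cliques.

A temporal graph on vertex type `V` is given by a labeling `lab : Sym2 V → L`
(only values on actual edges matter) together with an edge set
`E : Set (Sym2 V)`.  A temporal path is a nonempty list of vertices whose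
consecutive pairs are edges of the allowed edge set and whose labels are
non-decreasing along the path (non-strict temporal path).
-/

namespace TS

variable {V : Type} {L : Type} [LinearOrder L]

/-- The list of (undirected) edges traversed by a list of vertices. -/
def pathEdges (p : List V) : List (Sym2 V) :=
  (p.zip p.tail).map fun q => s(q.1, q.2)

/-- `p` is a temporal path using only edges from `S`, labelled by `lab`:
nonempty, all edges in `S`, labels non-decreasing along the path. -/
def IsTemporalPath (lab : Sym2 V → L) (S : Set (Sym2 V)) (p : List V) : Prop :=
  p ≠ [] ∧ (∀ e ∈ pathEdges p, e ∈ S) ∧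
    (pathEdges p).Chain' fun e f => lab e ≤ lab f

/-- `u` reaches `v` via a temporal path contained in `S`. -/
def Reaches (lab : Sym2 V → L) (S : Set (Sym2 V)) (u v : V) : Prop :=
  ∃ p : List V, p.head? = some u ∧ p.getLast? = some v ∧ IsTemporalPath lab S p

/-- Edge set of the complete graph on `V`. -/
def cliqueEdges (V : Type) : Set (Sym2 V) := {e | ¬ e.IsDiag}

/-- Edge set `A ⊗ B` of the complete bipartite graph with parts `α` and `β`. -/
def bicliqueEdges (α β : Type) : Set (Sym2 (α ⊕ β)) :=
  {e | ∃ a b, e = s(Sum.inl a, Sum.inr b)}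

/-- `S` is a spanner of the temporal graph with edge set `E`:
`S ⊆ E` and every vertex reaches every other vertex within `S`. -/
def IsSpanner (lab : Sym2 V → L) (E S : Set (Sym2 V)) : Prop :=
  S ⊆ E ∧ ∀ u v : V, Reaches lab S u v

/-- `S` is a bi-spanner of the temporal bi-clique with parts `α`, `β`:
`S ⊆ α ⊗ β` and every `a ∈ α` reaches every `b ∈ β` within `S`. -/
def IsBiSpanner {α β : Type} (lab : Sym2 (α ⊕ β) → L) (S : Set (Sym2 (α ⊕ β))) : Prop :=
  S ⊆ bicliqueEdges α β ∧ ∀ (a : α) (b : β), Reaches lab S (Sum.inl a) (Sum.inr b)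

/-- `σ_cl n`: the minimum number `m` such that every temporal clique on `n`
vertices admits a spanner with at most `m` edges. -/
noncomputable def sigmaCl (n : ℕ) : ℕ :=
  sInf {m | ∀ lab : Sym2 (Fin n) → ℕ, ∃ S : Finset (Sym2 (Fin n)),
    IsSpanner lab (cliqueEdges (Fin n)) (↑S) ∧ S.card ≤ m}

/-- `σ_bc n`: the minimum number `m` such that every temporal bi-clique with
`n` vertices on each side admits a bi-spanner with at most `m` edges. -/
noncomputable def sigmaBc (n : ℕ) : ℕ :=
  sInf {m | ∀ lab : Sym2 (Fin n ⊕ Fin n) → ℕ, ∃ S : Finset (Sym2 (Fin n ⊕ Fin n)),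
    IsBiSpanner lab (↑S) ∧ S.card ≤ m}

/-- `In(v,t)`: vertices reaching `v` via a temporal path (in edge set `E`)
all of whose labels are at most `t`. -/
def InSet (lab : Sym2 V → L) (E : Set (Sym2 V)) (v : V) (t : L) : Set V :=
  {u | ∃ p : List V, p.head? = some u ∧ p.getLast? = some v ∧
    IsTemporalPath lab E p ∧ ∀ e ∈ pathEdges p, lab e ≤ t}

/-- `Out(v,t)`: vertices that `v` reaches via a temporal path (in edge set `E`)
all of whose labels are at least `t`. -/
def OutSet (lab : Sym2 V → L) (E : Set (Sym2 V)) (v : V) (t : L) : Set V :=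
  {w | ∃ p : List V, p.head? = some v ∧ p.getLast? = some w ∧
    IsTemporalPath lab E p ∧ ∀ e ∈ pathEdges p, t ≤ lab e}

/-- `In(e)` for the edge `e = {u,v}`. -/
def InEdge (lab : Sym2 V → L) (E : Set (Sym2 V)) (u v : V) : Set V :=
  InSet lab E u (lab s(u, v)) ∪ InSet lab E v (lab s(u, v))

/-- `Out(e)` for the edge `e = {u,v}`. -/
def OutEdge (lab : Sym2 V → L) (E : Set (Sym2 V)) (u v : V) : Set V :=
  OutSet lab E u (lab s(u, v)) ∪ OutSet lab E v (lab s(u, v))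

variable {α β : Type}

/-- In a bi-clique, `b` is the earliest neighbor `π⁻(a)` of `a ∈ A`. -/
def IsEarliestNbrA (lab : Sym2 (α ⊕ β) → L) (a : α) (b : β) : Prop :=
  ∀ b' : β, lab s(Sum.inl a, Sum.inr b) ≤ lab s(Sum.inl a, Sum.inr b')

/-- In a bi-clique, `a` is the earliest neighbor `π⁻(b)` of `b ∈ B`. -/
def IsEarliestNbrB (lab : Sym2 (α ⊕ β) → L) (b : β) (a : α) : Prop :=
  ∀ a' : α, lab s(Sum.inl a, Sum.inr b) ≤ lab s(Sum.inl a', Sum.inr b)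

/-- In a bi-clique, `b` is the latest neighbor `π⁺(a)` of `a ∈ A`. -/
def IsLatestNbrA (lab : Sym2 (α ⊕ β) → L) (a : α) (b : β) : Prop :=
  ∀ b' : β, lab s(Sum.inl a, Sum.inr b') ≤ lab s(Sum.inl a, Sum.inr b)

/-- In a bi-clique, `a` is the latest neighbor `π⁺(b)` of `b ∈ B`. -/
def IsLatestNbrB (lab : Sym2 (α ⊕ β) → L) (b : β) (a : α) : Prop :=
  ∀ a' : α, lab s(Sum.inl a', Sum.inr b) ≤ lab s(Sum.inl a, Sum.inr b)

/-- The bi-clique is extremally matched: both the set `M⁻` of earliest edges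
and the set `M⁺` of latest edges form perfect matchings, i.e. the earliest-
(resp. latest-) neighbor maps of the two sides are mutually inverse. -/
def ExtremallyMatched (lab : Sym2 (α ⊕ β) → L) : Prop :=
  (∃ (f : α → β) (g : β → α),
    (∀ a, IsEarliestNbrA lab a (f a)) ∧ (∀ b, IsEarliestNbrB lab b (g b)) ∧
    (∀ a, g (f a) = a) ∧ (∀ b, f (g b) = b)) ∧
  (∃ (f : α → β) (g : β → α),
    (∀ a, IsLatestNbrA lab a (f a)) ∧ (∀ b, IsLatestNbrB lab b (g b)) ∧
    (∀ a, g (f a) = a) ∧ (∀ b, f (g b) = b))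

/-- `a ∈ A` is dismountable: there is `a' ≠ a` with
`λ({a, π⁻(a')}) ≤ λ({a', π⁻(a')})`. -/
def DismountableA (lab : Sym2 (α ⊕ β) → L) (a : α) : Prop :=
  ∃ (a' : α) (b : β), a' ≠ a ∧ IsEarliestNbrA lab a' b ∧
    lab s(Sum.inl a, Sum.inr b) ≤ lab s(Sum.inl a', Sum.inr b)

/-- `b ∈ B` is dismountable: there is `b' ≠ b` with
`λ({b', π⁺(b')}) ≤ λ({b, π⁺(b')})`. -/
def DismountableB (lab : Sym2 (α ⊕ β) → L) (b : β) : Prop :=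
  ∃ (b' : β) (a : α), b' ≠ b ∧ IsLatestNbrB lab b' a ∧
    lab s(Sum.inl a, Sum.inr b') ≤ lab s(Sum.inl a, Sum.inr b)

/-- The edge `{a', b'}` is `e`-reverted for `e = {a,b}`:
`λ({a', b}) ≤ λ({π⁺(b'), b})` or `λ({π⁻(a'), a}) ≤ λ({b', a})`. -/
def Reverted (lab : Sym2 (α ⊕ β) → L) (a : α) (b : β) (a' : α) (b' : β) : Prop :=
  (∃ a'' : α, IsLatestNbrB lab b' a'' ∧
    lab s(Sum.inl a', Sum.inr b) ≤ lab s(Sum.inl a'', Sum.inr b)) ∨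
  (∃ b'' : β, IsEarliestNbrA lab a' b'' ∧
    lab s(Sum.inl a, Sum.inr b'') ≤ lab s(Sum.inl a, Sum.inr b'))

/-- `M(e)`: the set of edges of the bi-clique that are *not* `e`-reverted,
for `e = {a,b}`. -/
def MSet (lab : Sym2 (α ⊕ β) → L) (a : α) (b : β) : Set (Sym2 (α ⊕ β)) :=
  {e | ∃ (a' : α) (b' : β), e = s(Sum.inl a', Sum.inr b') ∧ ¬ Reverted lab a b a' b'}

/-- `ind_{a}({a,b})`: the (1-based) rank of the edge `{a,b}` among the edges
incident to `a ∈ A`, ordered increasingly by label. -/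
def indA [Fintype β] (lab : Sym2 (α ⊕ β) → ℕ) (a : α) (b : β) : ℕ :=
  (Finset.univ.filter fun b' : β =>
    lab s(Sum.inl a, Sum.inr b') ≤ lab s(Sum.inl a, Sum.inr b)).card

/-- `ind_{b}({a,b})`: the (1-based) rank of the edge `{a,b}` among the edges
incident to `b ∈ B`, ordered increasingly by label. -/
def indB [Fintype α] (lab : Sym2 (α ⊕ β) → ℕ) (a : α) (b : β) : ℕ :=
  (Finset.univ.filter fun a' : α =>
    lab s(Sum.inl a', Sum.inr b) ≤ lab s(Sum.inl a, Sum.inr b)).card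

/-- Underlying symmetric label function of the shifted matching graph `SM_n`:
the edge `{a_i, b_j}` gets label `(j - i) mod n`. -/
def smFun (n : ℕ) : (Fin n ⊕ Fin n) → (Fin n ⊕ Fin n) → ℕ
  | Sum.inl i, Sum.inr j => (n + (j : ℕ) - (i : ℕ)) % n
  | Sum.inr j, Sum.inl i => (n + (j : ℕ) - (i : ℕ)) % n
  | _, _ => 0

theorem smFun_symm (n : ℕ) : ∀ x y, smFun n x y = smFun n y x := by
  rintro (i | i) (j | j) <;> rfl

/-- The labeling of the shifted matching graph `SM_n`. -/
def smLab (n : ℕ) : Sym2 (Fin n ⊕ Fin n) → ℕ :=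
  Sym2.lift ⟨smFun n, smFun_symm n⟩

end TS

namespace TS

lemma mem_inSet_pair {V L : Type} [LinearOrder L] (lab : Sym2 V → L) (E : Set (Sym2 V))
    {u v : V} (hE : s(u, v) ∈ E) {t : L} (h : lab s(u, v) ≤ t) :
    u ∈ InSet lab E v t := by
  refine ⟨[u, v], rfl, by simp, ⟨by simp, ?_, ?_⟩, ?_⟩
  · intro e he
    simp only [pathEdges, List.zip_cons_cons, List.tail_cons, List.zip_nil_right,
      List.map_cons, List.map_nil, List.mem_singleton] at he
    subst he; exact hE
  · simp [pathEdges, List.Chain']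
  · intro e he
    simp only [pathEdges, List.zip_cons_cons, List.tail_cons, List.zip_nil_right,
      List.map_cons, List.map_nil, List.mem_singleton] at he
    subst he; exact h

lemma mem_outSet_pair {V L : Type} [LinearOrder L] (lab : Sym2 V → L) (E : Set (Sym2 V))
    {v w : V} (hE : s(v, w) ∈ E) {t : L} (h : t ≤ lab s(v, w)) :
    w ∈ OutSet lab E v t := by
  refine ⟨[v, w], rfl, by simp, ⟨by simp, ?_, ?_⟩, ?_⟩
  · intro e he
    simp only [pathEdges, List.zip_cons_cons, List.tail_cons, List.zip_nil_right,
      List.map_cons, List.map_nil, List.mem_singleton] at he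
    subst he; exact hE
  · simp [pathEdges, List.Chain']
  · intro e he
    simp only [pathEdges, List.zip_cons_cons, List.tail_cons, List.zip_nil_right,
      List.map_cons, List.map_nil, List.mem_singleton] at he
    subst he; exact h

lemma mem_inSet_triple {V L : Type} [LinearOrder L] (lab : Sym2 V → L) (E : Set (Sym2 V))
    {u w v : V} (hE1 : s(u, w) ∈ E) (hE2 : s(w, v) ∈ E) {t : L}
    (h1 : lab s(u, w) ≤ lab s(w, v)) (h2 : lab s(w, v) ≤ t) :
    u ∈ InSet lab E v t := by
  refine ⟨[u, w, v], rfl, by simp, ⟨by simp, ?_, ?_⟩, ?_⟩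
  · intro e he
    simp only [pathEdges, List.zip_cons_cons, List.tail_cons, List.zip_nil_right,
      List.map_cons, List.map_nil, List.mem_cons, List.mem_singleton,
      List.not_mem_nil, or_false] at he
    rcases he with h | h <;> subst h
    · exact hE1
    · exact hE2
  · simp [pathEdges, h1, List.Chain']
  · intro e he
    simp only [pathEdges, List.zip_cons_cons, List.tail_cons, List.zip_nil_right,
      List.map_cons, List.map_nil, List.mem_cons, List.mem_singleton,
      List.not_mem_nil, or_false] at he
    rcases he with h | h <;> subst h
    · exact h1.trans h2
    · exact h2

lemma mem_outSet_triple {V L : Type} [LinearOrder L] (lab : Sym2 V → L) (E : Set (Sym2 V))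
    {v w x : V} (hE1 : s(v, w) ∈ E) (hE2 : s(w, x) ∈ E) {t : L}
    (h1 : t ≤ lab s(v, w)) (h2 : lab s(v, w) ≤ lab s(w, x)) :
    x ∈ OutSet lab E v t := by
  refine ⟨[v, w, x], rfl, by simp, ⟨by simp, ?_, ?_⟩, ?_⟩
  · intro e he
    simp only [pathEdges, List.zip_cons_cons, List.tail_cons, List.zip_nil_right,
      List.map_cons, List.map_nil, List.mem_cons, List.mem_singleton,
      List.not_mem_nil, or_false] at he
    rcases he with h | h <;> subst h
    · exact hE1
    · exact hE2
  · simp [pathEdges, h2, List.Chain']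
  · intro e he
    simp only [pathEdges, List.zip_cons_cons, List.tail_cons, List.zip_nil_right,
      List.map_cons, List.map_nil, List.mem_cons, List.mem_singleton,
      List.not_mem_nil, or_false] at he
    rcases he with h | h <;> subst h
    · exact h1
    · exact h1.trans h2

/-- in an extremally matched bi-clique with injective labeling
and `n` vertices per side, a `c`-steep edge `e = {a,b}` (for `c ∈ (0,1]`,
`|ind_a(e) − ind_b(e)| ≥ cn`) satisfies `|In(e) ∩ Out(e)| ≥ 2cn`. -/
theorem stmt14 {α β : Type} [Fintype α] [Fintype β] (n : ℕ)
    (hA : Fintype.card α = n) (hB : Fintype.card β = n)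
    (lab : Sym2 (α ⊕ β) → ℕ) (hinj : Set.InjOn lab (bicliqueEdges α β))
    (hEM : ExtremallyMatched lab) (c : ℝ) (hc0 : 0 < c) (hc1 : c ≤ 1)
    (a : α) (b : β)
    (hsteep : c * n ≤ |(indA lab a b : ℝ) - (indB lab a b : ℝ)|) :
    2 * c * n ≤
      ((InEdge lab (bicliqueEdges α β) (Sum.inl a) (Sum.inr b) ∩
        OutEdge lab (bicliqueEdges α β) (Sum.inl a) (Sum.inr b)).ncard : ℝ) := by
  classical
  obtain ⟨⟨fm, gm, hfm, hgm, hgfm, hfgm⟩, ⟨fp, gp, hfp, hgp, hgfp, hfgp⟩⟩ := hEM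
  set E := bicliqueEdges α β with hEdef
  set t := lab s(Sum.inl a, Sum.inr b) with htdef
  have hEab : ∀ (x : α) (y : β), s(Sum.inl x, Sum.inr y) ∈ E := fun x y => ⟨x, y, rfl⟩
  have hEba : ∀ (x : α) (y : β), s(Sum.inr y, Sum.inl x) ∈ E := fun x y => ⟨x, y, Sym2.eq_swap⟩
  set I : Set (α ⊕ β) := InEdge lab E (Sum.inl a) (Sum.inr b) ∩
    OutEdge lab E (Sum.inl a) (Sum.inr b) with hIdef
  set FA : Finset α := Finset.univ.filter (fun a' : α => Sum.inl a' ∈ I) with hFAdef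
  set FB : Finset β := Finset.univ.filter (fun b' : β => Sum.inr b' ∈ I) with hFBdef
  set kA := indA lab a b with hkA
  set kB := indB lab a b with hkB
  -- count bound
  have hcard : FA.card + FB.card ≤ I.ncard := by
    have hfin : I.Finite := Set.toFinite I
    have h1 : (FA.image Sum.inl ∪ FB.image Sum.inr : Finset (α ⊕ β)) ⊆ hfin.toFinset := by
      intro x hx
      rw [Set.Finite.mem_toFinset]
      simp only [Finset.mem_union, Finset.mem_image] at hx
      rcases hx with ⟨a', ha', rfl⟩ | ⟨b', hb', rfl⟩
      · exact (Finset.mem_filter.mp ha').2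
      · exact (Finset.mem_filter.mp hb').2
    have h2 : (FA.image Sum.inl ∪ FB.image Sum.inr : Finset (α ⊕ β)).card
        = FA.card + FB.card := by
      rw [Finset.card_union_of_disjoint, Finset.card_image_of_injective _ Sum.inl_injective,
        Finset.card_image_of_injective _ Sum.inr_injective]
      simp [Finset.disjoint_left]
    rw [Set.ncard_eq_toFinset_card _ hfin]
    calc FA.card + FB.card = _ := h2.symm
    _ ≤ hfin.toFinset.card := Finset.card_le_card h1
  -- four counting facts
  have hFB1 : kA ≤ kB + FB.card := by
    set T : Finset β := Finset.univ.filter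
      (fun b' : β => lab s(Sum.inl a, Sum.inr b') ≤ t) with hTdef
    have hTcard : T.card = kA := rfl
    have hsplit := Finset.card_filter_add_card_filter_not
      (s := T) (p := fun b' : β => t ≤ lab s(Sum.inl (gp b'), Sum.inr b))
    have hgoodFB : T.filter (fun b' : β => t ≤ lab s(Sum.inl (gp b'), Sum.inr b)) ⊆ FB := by
      intro b' hb'
      rw [Finset.mem_filter] at hb'
      obtain ⟨hbT, h2⟩ := hb'
      rw [hTdef, Finset.mem_filter] at hbT
      rw [hFBdef, Finset.mem_filter]
      refine ⟨Finset.mem_univ _, ?_, ?_⟩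
      · exact Or.inl (mem_inSet_pair lab E (hEba a b') (by rw [Sym2.eq_swap]; exact hbT.2))
      · refine Or.inr (mem_outSet_triple lab E (hEba (gp b') b) (hEab (gp b') b')
          (by rw [Sym2.eq_swap (a := Sum.inr b) (b := Sum.inl (gp b'))]; exact h2) ?_)
        rw [Sym2.eq_swap]
        have := hfp (gp b') b
        rwa [hfgp b'] at this
    have hbadle : (T.filter (fun b' : β =>
        ¬ t ≤ lab s(Sum.inl (gp b'), Sum.inr b))).card ≤ kB := by
      set bad := T.filter (fun b' : β => ¬ t ≤ lab s(Sum.inl (gp b'), Sum.inr b)) with hbd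
      have hinj' : Set.InjOn gp bad := fun x _ y _ h => by
        have := congrArg fp h; rwa [hfgp, hfgp] at this
      calc bad.card = (bad.image gp).card := (Finset.card_image_of_injOn hinj').symm
      _ ≤ kB := by
          apply Finset.card_le_card
          intro a' ha'
          rw [Finset.mem_image] at ha'
          obtain ⟨b', hb', rfl⟩ := ha'
          rw [hbd, Finset.mem_filter, not_le] at hb'
          exact Finset.mem_filter.mpr ⟨Finset.mem_univ _, hb'.2.le⟩
    have := Finset.card_le_card hgoodFB
    omega
  have hFA1 : kA ≤ kB + FA.card := by
    set S : Finset α := Finset.univ.filter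
      (fun a' : α => t ≤ lab s(Sum.inl a', Sum.inr b)) with hSdef
    have hSn : n ≤ S.card + kB := by
      have h2 := Finset.card_filter_add_card_filter_not
        (s := (Finset.univ : Finset α)) (p := fun a' : α => t ≤ lab s(Sum.inl a', Sum.inr b))
      rw [← hSdef] at h2
      have h1 : (Finset.univ.filter (fun a' : α =>
          ¬ t ≤ lab s(Sum.inl a', Sum.inr b))).card ≤ kB := by
        apply Finset.card_le_card
        intro a' ha'
        rw [Finset.mem_filter, not_le] at ha'
        exact Finset.mem_filter.mpr ⟨Finset.mem_univ _, ha'.2.le⟩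
      rw [Finset.card_univ, hA] at h2
      omega
    have hsplit := Finset.card_filter_add_card_filter_not
      (s := S) (p := fun a' : α => lab s(Sum.inl a, Sum.inr (fm a')) ≤ t)
    have hgoodFA : S.filter (fun a' : α => lab s(Sum.inl a, Sum.inr (fm a')) ≤ t) ⊆ FA := by
      intro a' ha'
      rw [Finset.mem_filter] at ha'
      obtain ⟨haS, h2⟩ := ha'
      rw [hSdef, Finset.mem_filter] at haS
      rw [hFAdef, Finset.mem_filter]
      refine ⟨Finset.mem_univ _, ?_, ?_⟩
      · refine Or.inl (mem_inSet_triple lab E (hEab a' (fm a')) (hEba a (fm a'))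
          ?_ (by rw [Sym2.eq_swap]; exact h2))
        rw [Sym2.eq_swap (a := Sum.inr (fm a'))]
        have := hgm (fm a') a
        rwa [hgfm a'] at this
      · exact Or.inr (mem_outSet_pair lab E (hEba a' b)
          (by rw [Sym2.eq_swap (a := Sum.inr b) (b := Sum.inl a')]; exact haS.2))
    have hbadle : (S.filter (fun a' : α =>
        ¬ lab s(Sum.inl a, Sum.inr (fm a')) ≤ t)).card + kA ≤ n := by
      set bad := S.filter (fun a' : α => ¬ lab s(Sum.inl a, Sum.inr (fm a')) ≤ t) with hbd
      have hinj' : Set.InjOn fm bad := fun x _ y _ h => by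
        have := congrArg gm h; rwa [hgfm, hgfm] at this
      have himg : bad.image fm ⊆ Finset.univ.filter
          (fun b'' : β => ¬ lab s(Sum.inl a, Sum.inr b'') ≤ t) := by
        intro b'' hb''
        rw [Finset.mem_image] at hb''
        obtain ⟨a', ha', rfl⟩ := hb''
        rw [hbd, Finset.mem_filter] at ha'
        exact Finset.mem_filter.mpr ⟨Finset.mem_univ _, ha'.2⟩
      have h3 := Finset.card_filter_add_card_filter_not
        (s := (Finset.univ : Finset β)) (p := fun b'' : β => lab s(Sum.inl a, Sum.inr b'') ≤ t)
      rw [Finset.card_univ, hB] at h3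
      have h4 : bad.card = (bad.image fm).card := (Finset.card_image_of_injOn hinj').symm
      have h5 := Finset.card_le_card himg
      have h6 : (Finset.univ.filter (fun b'' : β =>
          lab s(Sum.inl a, Sum.inr b'') ≤ t)).card = kA := rfl
      omega
    have := Finset.card_le_card hgoodFA
    omega
  have hFA2 : kB ≤ kA + FA.card := by
    set T : Finset α := Finset.univ.filter
      (fun a' : α => lab s(Sum.inl a', Sum.inr b) ≤ t) with hTdef
    have hTcard : T.card = kB := rfl
    have hsplit := Finset.card_filter_add_card_filter_not
      (s := T) (p := fun a' : α => t ≤ lab s(Sum.inl a, Sum.inr (fp a')))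
    have hgoodFA : T.filter (fun a' : α => t ≤ lab s(Sum.inl a, Sum.inr (fp a'))) ⊆ FA := by
      intro a' ha'
      rw [Finset.mem_filter] at ha'
      obtain ⟨haT, h2⟩ := ha'
      rw [hTdef, Finset.mem_filter] at haT
      rw [hFAdef, Finset.mem_filter]
      refine ⟨Finset.mem_univ _, ?_, ?_⟩
      · exact Or.inr (mem_inSet_pair lab E (hEab a' b) haT.2)
      · refine Or.inl (mem_outSet_triple lab E (hEab a (fp a')) (hEba a' (fp a')) h2 ?_)
        rw [Sym2.eq_swap (a := Sum.inr (fp a'))]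
        have := hgp (fp a') a
        rwa [hgfp a'] at this
    have hbadle : (T.filter (fun a' : α =>
        ¬ t ≤ lab s(Sum.inl a, Sum.inr (fp a')))).card ≤ kA := by
      set bad := T.filter (fun a' : α => ¬ t ≤ lab s(Sum.inl a, Sum.inr (fp a'))) with hbd
      have hinj' : Set.InjOn fp bad := fun x _ y _ h => by
        have := congrArg gp h; rwa [hgfp, hgfp] at this
      calc bad.card = (bad.image fp).card := (Finset.card_image_of_injOn hinj').symm
      _ ≤ kA := by
          apply Finset.card_le_card
          intro b'' hb''
          rw [Finset.mem_image] at hb''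
          obtain ⟨a', ha', rfl⟩ := hb''
          rw [hbd, Finset.mem_filter, not_le] at ha'
          exact Finset.mem_filter.mpr ⟨Finset.mem_univ _, ha'.2.le⟩
    have := Finset.card_le_card hgoodFA
    omega
  have hFB2 : kB ≤ kA + FB.card := by
    set S : Finset β := Finset.univ.filter
      (fun b' : β => t ≤ lab s(Sum.inl a, Sum.inr b')) with hSdef
    have hSn : n ≤ S.card + kA := by
      have h2 := Finset.card_filter_add_card_filter_not
        (s := (Finset.univ : Finset β)) (p := fun b' : β => t ≤ lab s(Sum.inl a, Sum.inr b'))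
      rw [← hSdef] at h2
      have h1 : (Finset.univ.filter (fun b' : β =>
          ¬ t ≤ lab s(Sum.inl a, Sum.inr b'))).card ≤ kA := by
        apply Finset.card_le_card
        intro b' hb'
        rw [Finset.mem_filter, not_le] at hb'
        exact Finset.mem_filter.mpr ⟨Finset.mem_univ _, hb'.2.le⟩
      rw [Finset.card_univ, hB] at h2
      omega
    have hsplit := Finset.card_filter_add_card_filter_not
      (s := S) (p := fun b' : β => lab s(Sum.inl (gm b'), Sum.inr b) ≤ t)
    have hgoodFB : S.filter (fun b' : β => lab s(Sum.inl (gm b'), Sum.inr b) ≤ t) ⊆ FB := by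
      intro b' hb'
      rw [Finset.mem_filter] at hb'
      obtain ⟨hbS, h2⟩ := hb'
      rw [hSdef, Finset.mem_filter] at hbS
      rw [hFBdef, Finset.mem_filter]
      refine ⟨Finset.mem_univ _, ?_, ?_⟩
      · refine Or.inr (mem_inSet_triple lab E (hEba (gm b') b') (hEab (gm b') b) ?_ h2)
        rw [Sym2.eq_swap]
        have := hfm (gm b') b
        rwa [hfgm b'] at this
      · exact Or.inl (mem_outSet_pair lab E (hEab a b') hbS.2)
    have hbadle : (S.filter (fun b' : β =>
        ¬ lab s(Sum.inl (gm b'), Sum.inr b) ≤ t)).card + kB ≤ n := by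
      set bad := S.filter (fun b' : β => ¬ lab s(Sum.inl (gm b'), Sum.inr b) ≤ t) with hbd
      have hinj' : Set.InjOn gm bad := fun x _ y _ h => by
        have := congrArg fm h; rwa [hfgm, hfgm] at this
      have himg : bad.image gm ⊆ Finset.univ.filter
          (fun a'' : α => ¬ lab s(Sum.inl a'', Sum.inr b) ≤ t) := by
        intro a'' ha''
        rw [Finset.mem_image] at ha''
        obtain ⟨b', hb', rfl⟩ := ha''
        rw [hbd, Finset.mem_filter] at hb'
        exact Finset.mem_filter.mpr ⟨Finset.mem_univ _, hb'.2⟩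
      have h3 := Finset.card_filter_add_card_filter_not
        (s := (Finset.univ : Finset α)) (p := fun a'' : α => lab s(Sum.inl a'', Sum.inr b) ≤ t)
      rw [Finset.card_univ, hA] at h3
      have h4 : bad.card = (bad.image gm).card := (Finset.card_image_of_injOn hinj').symm
      have h5 := Finset.card_le_card himg
      have h6 : (Finset.univ.filter (fun a'' : α =>
          lab s(Sum.inl a'', Sum.inr b) ≤ t)).card = kB := rfl
      omega
    have := Finset.card_le_card hgoodFB
    omega
  -- conclude
  have hcardR : (FA.card : ℝ) + FB.card ≤ (I.ncard : ℝ) := by exact_mod_cast hcard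
  rcases abs_cases ((kA : ℝ) - (kB : ℝ)) with ⟨habs, _⟩ | ⟨habs, _⟩ <;> rw [habs] at hsteep
  · have e1 : (kA : ℝ) ≤ (kB : ℝ) + FB.card := by exact_mod_cast hFB1
    have e2 : (kA : ℝ) ≤ (kB : ℝ) + FA.card := by exact_mod_cast hFA1
    linarith
  · have e1 : (kB : ℝ) ≤ (kA : ℝ) + FB.card := by exact_mod_cast hFB2
    have e2 : (kB : ℝ) ≤ (kA : ℝ) + FA.card := by exact_mod_cast hFA2
    linarith

end TS
end

section
/- In the shifted matching graph SM_n, for all indices i, j ∈ {0,…,n−1}, the pivot-set of the edge {a_i, b_j} is trivial: In({a_i, b_j}) ∩ Out({a_i, b_j}) = {a_i, b_j}. -/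
namespace TS

/-- Potential function for the shifted matching graph: `F n (a_p) s = p + s`,
`F n (b_q) s = q`, valued in `ZMod n`. -/
def smF (n : ℕ) : (Fin n ⊕ Fin n) → ℕ → ZMod n
  | Sum.inl p, s => ((p : ℕ) : ZMod n) + (s : ZMod n)
  | Sum.inr q, _ => ((q : ℕ) : ZMod n)

lemma smLab_lt (n : ℕ) (hn : 0 < n) (e : Sym2 (Fin n ⊕ Fin n)) : smLab n e < n := by
  induction e using Sym2.ind with
  | _ x y =>
    rcases x with a | a <;> rcases y with b | b <;>
      simp only [smLab, Sym2.lift_mk, smFun] <;>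
      first
        | exact hn
        | exact Nat.mod_lt _ hn

lemma smLab_cast (n : ℕ) (a b : Fin n) :
    ((smLab n s(Sum.inl a, Sum.inr b) : ℕ) : ZMod n) = ((b : ℕ) : ZMod n) - ((a : ℕ) : ZMod n) := by
  have h : (a : ℕ) ≤ n + (b : ℕ) := le_trans (le_of_lt a.isLt) (Nat.le_add_right _ _)
  show (((n + (b : ℕ) - (a : ℕ)) % n : ℕ) : ZMod n) = _
  rw [ZMod.natCast_mod, Nat.cast_sub h]
  push_cast
  simp

/-- Core lemma: along a temporal path in the biclique with labels in `[s, t]`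
(nondecreasing, `s ≤` first label, all labels `≤ t`), the potential moves
from `smF n u s` to `smF n v t` by adding some `T ≤ t - s`. -/
lemma smF_core (n : ℕ) (p : List (Fin n ⊕ Fin n)) :
    ∀ (s t : ℕ) (u v : Fin n ⊕ Fin n), s ≤ t → p.head? = some u → p.getLast? = some v →
    (∀ e ∈ pathEdges p, e ∈ bicliqueEdges (Fin n) (Fin n)) →
    (pathEdges p).Chain' (fun e f => smLab n e ≤ smLab n f) →
    (∀ e ∈ pathEdges p, smLab n e ≤ t) →
    (∀ e ∈ (pathEdges p).head?, s ≤ smLab n e) →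
    ∃ T : ℕ, T ≤ t - s ∧ smF n u s + (T : ZMod n) = smF n v t := by
  induction p with
  | nil => intro s t u v _ h; simp at h
  | cons u0 rest ih =>
    intro s t u v hst hh hl hE hC hle hge
    simp only [List.head?_cons, Option.some.injEq] at hh
    subst hh
    match rest with
    | [] =>
      simp only [List.getLast?_singleton, Option.some.injEq] at hl
      subst hl
      rcases u0 with a | b
      · refine ⟨t - s, le_refl _, ?_⟩
        show ((a : ℕ) : ZMod n) + (s : ZMod n) + _ = ((a : ℕ) : ZMod n) + (t : ZMod n)
        rw [Nat.cast_sub hst]; ring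
      · exact ⟨0, Nat.zero_le _, by simp [smF]⟩
    | w :: rest' =>
      have hpe : pathEdges (u0 :: w :: rest') = s(u0, w) :: pathEdges (w :: rest') := by
        simp [pathEdges]
      rw [hpe] at hE hC hle hge
      have hEdge : s(u0, w) ∈ bicliqueEdges (Fin n) (Fin n) := hE _ List.mem_cons_self
      set ℓ := smLab n s(u0, w) with hℓ
      have hℓt : ℓ ≤ t := hle _ List.mem_cons_self
      have hsℓ : s ≤ ℓ := hge _ (by simp)
      have hC' := List.isChain_cons.mp hC
      have hl' : (w :: rest').getLast? = some v := by
        rwa [List.getLast?_cons_cons] at hl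
      obtain ⟨T', hT', heq⟩ := ih ℓ t w v hℓt (by simp) hl'
        (fun e he => hE e (List.mem_cons_of_mem _ he)) hC'.2
        (fun e he => hle e (List.mem_cons_of_mem _ he))
        (fun e he => hC'.1 e he)
      obtain ⟨a, b, hab⟩ := hEdge
      rw [Sym2.eq_iff] at hab
      rcases hab with ⟨hu, hw⟩ | ⟨hu, hw⟩
      · -- u0 = inl a, w = inr b : A → B step
        subst hu; subst hw
        have hb : ((b : ℕ) : ZMod n) = ((a : ℕ) : ZMod n) + (ℓ : ZMod n) := by
          rw [hℓ, smLab_cast]; ring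
        refine ⟨(ℓ - s) + T', by omega, ?_⟩
        have : smF n (Sum.inr b) ℓ + (T' : ZMod n) = smF n v t := heq
        show ((a : ℕ) : ZMod n) + (s : ZMod n) + _ = smF n v t
        rw [← this]
        show _ = ((b : ℕ) : ZMod n) + (T' : ZMod n)
        rw [hb, Nat.cast_add, Nat.cast_sub hsℓ]; ring
      · -- u0 = inr b, w = inl a : B → A step
        subst hu; subst hw
        have hℓ2 : smLab n s(Sum.inr b, Sum.inl a) = smLab n s(Sum.inl a, Sum.inr b) := by
          rw [Sym2.eq_swap]
        have hb : ((b : ℕ) : ZMod n) = ((a : ℕ) : ZMod n) + (ℓ : ZMod n) := by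
          rw [hℓ, hℓ2, smLab_cast]; ring
        refine ⟨T', by omega, ?_⟩
        have : smF n (Sum.inl a) ℓ + (T' : ZMod n) = smF n v t := heq
        rw [← this]
        show ((b : ℕ) : ZMod n) + (T' : ZMod n) = ((a : ℕ) : ZMod n) + (ℓ : ZMod n) + (T' : ZMod n)
        rw [hb]

lemma smF_in_bound (n : ℕ) (v x : Fin n ⊕ Fin n) (t : ℕ)
    (hx : x ∈ InSet (smLab n) (bicliqueEdges (Fin n) (Fin n)) v t) :
    ∃ T : ℕ, T ≤ t ∧ smF n x 0 + (T : ZMod n) = smF n v t := by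
  obtain ⟨p, hh, hl, ⟨hne, hE, hC⟩, hb⟩ := hx
  obtain ⟨T, hT, heq⟩ := smF_core n p 0 t x v (Nat.zero_le _) hh hl hE hC hb
    (fun e _ => Nat.zero_le _)
  exact ⟨T, by omega, heq⟩

lemma smF_out_bound (n : ℕ) (hn : 0 < n) (v x : Fin n ⊕ Fin n) (t : ℕ) (ht : t ≤ n - 1)
    (hx : x ∈ OutSet (smLab n) (bicliqueEdges (Fin n) (Fin n)) v t) :
    ∃ U : ℕ, U ≤ n - 1 - t ∧ smF n v t + (U : ZMod n) = smF n x (n - 1) := by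
  obtain ⟨p, hh, hl, ⟨hne, hE, hC⟩, hb⟩ := hx
  exact smF_core n p t (n - 1) v x ht hh hl hE hC
    (fun e _ => by have := smLab_lt n hn e; omega)
    (fun e he => hb e (List.mem_of_mem_head? he))

lemma single_temporal (n : ℕ) (x : Fin n ⊕ Fin n) :
    IsTemporalPath (smLab n) (bicliqueEdges (Fin n) (Fin n)) [x] :=
  ⟨by simp, by simp [pathEdges], by simp [pathEdges]; exact List.isChain_nil⟩

/-- in the shifted matching graph `SM_n`, the pivot-set of every
edge `{a_i, b_j}` is trivial:
`In({a_i,b_j}) ∩ Out({a_i,b_j}) = {a_i, b_j}`. -/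
theorem stmt15 (n : ℕ) (hn : 0 < n) (i j : Fin n) :
    InEdge (smLab n) (bicliqueEdges (Fin n) (Fin n)) (Sum.inl i) (Sum.inr j) ∩
      OutEdge (smLab n) (bicliqueEdges (Fin n) (Fin n)) (Sum.inl i) (Sum.inr j) =
      {Sum.inl i, Sum.inr j} := by
  haveI : NeZero n := ⟨hn.ne'⟩
  set t := smLab n s(Sum.inl i, Sum.inr j) with htdef
  have ht1 : t ≤ n - 1 := by have := smLab_lt n hn s(Sum.inl i, Sum.inr j); omega
  have kj : ((i : ℕ) : ZMod n) + ((t : ℕ) : ZMod n) = ((j : ℕ) : ZMod n) := by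
    rw [htdef, smLab_cast]; ring
  ext x
  constructor
  · rintro ⟨hin, hout⟩
    -- both In branches give the same potential value `j` at time `t`
    have hT : ∃ T : ℕ, T ≤ t ∧ smF n x 0 + (T : ZMod n) = ((j : ℕ) : ZMod n) := by
      rcases hin with h | h
      · obtain ⟨T, hT, heq⟩ := smF_in_bound n _ x t h
        exact ⟨T, hT, by rw [heq]; exact kj⟩
      · obtain ⟨T, hT, heq⟩ := smF_in_bound n _ x t h
        exact ⟨T, hT, heq⟩
    have hU : ∃ U : ℕ, U ≤ n - 1 - t ∧ ((j : ℕ) : ZMod n) + (U : ZMod n) = smF n x (n - 1) := by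
      rcases hout with h | h
      · obtain ⟨U, hU, heq⟩ := smF_out_bound n hn _ x t ht1 h
        exact ⟨U, hU, by rw [← kj]; exact heq⟩
      · obtain ⟨U, hU, heq⟩ := smF_out_bound n hn _ x t ht1 h
        exact ⟨U, hU, heq⟩
    obtain ⟨T, hTle, hTeq⟩ := hT
    obtain ⟨U, hUle, hUeq⟩ := hU
    rcases x with p | q
    · -- x = a_p : show p = i
      left
      have h1 : ((p : ℕ) : ZMod n) + ((0 : ℕ) : ZMod n) + (T : ZMod n) = ((j : ℕ) : ZMod n) := hTeq
      have h2 : ((j : ℕ) : ZMod n) + (U : ZMod n) = ((p : ℕ) : ZMod n) + (((n - 1 : ℕ)) : ZMod n) := hUeq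
      have hsum : ((T + U : ℕ) : ZMod n) = (((n - 1 : ℕ)) : ZMod n) := by
        have := h2
        rw [← h1] at this
        push_cast at this ⊢
        linear_combination this
      have hval := congrArg ZMod.val hsum
      rw [ZMod.val_cast_of_lt (by omega : T + U < n),
        ZMod.val_cast_of_lt (by omega : n - 1 < n)] at hval
      have hTt : T = t := by omega
      have hpi : ((p : ℕ) : ZMod n) = ((i : ℕ) : ZMod n) := by
        have h1' : ((p : ℕ) : ZMod n) + (t : ZMod n) = ((j : ℕ) : ZMod n) := by
          rw [← h1, hTt]; push_cast; ring
        rw [← kj] at h1'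
        exact add_right_cancel h1'
      have := congrArg ZMod.val hpi
      rw [ZMod.val_cast_of_lt p.isLt, ZMod.val_cast_of_lt i.isLt] at this
      exact congrArg Sum.inl (Fin.ext this)
    · -- x = b_q : show q = j
      right
      have h1 : ((q : ℕ) : ZMod n) + (T : ZMod n) = ((j : ℕ) : ZMod n) := hTeq
      have h2 : ((j : ℕ) : ZMod n) + (U : ZMod n) = ((q : ℕ) : ZMod n) := hUeq
      have hsum : ((T + U : ℕ) : ZMod n) = ((0 : ℕ) : ZMod n) := by
        have := h2
        rw [← h1] at this
        push_cast at this ⊢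
        linear_combination this
      have hval := congrArg ZMod.val hsum
      rw [ZMod.val_cast_of_lt (by omega : T + U < n),
        ZMod.val_cast_of_lt (by omega : (0 : ℕ) < n)] at hval
      have hT0 : T = 0 := by omega
      have hqj : ((q : ℕ) : ZMod n) = ((j : ℕ) : ZMod n) := by
        rw [← h1, hT0]; push_cast; ring
      have := congrArg ZMod.val hqj
      rw [ZMod.val_cast_of_lt q.isLt, ZMod.val_cast_of_lt j.isLt] at this
      exact congrArg Sum.inr (Fin.ext this)
  · rintro (rfl | rfl)
    · exact ⟨Or.inl ⟨[Sum.inl i], rfl, rfl, single_temporal n _, by simp [pathEdges]⟩,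
        Or.inl ⟨[Sum.inl i], rfl, rfl, single_temporal n _, by simp [pathEdges]⟩⟩
    · exact ⟨Or.inr ⟨[Sum.inr j], rfl, rfl, single_temporal n _, by simp [pathEdges]⟩,
        Or.inr ⟨[Sum.inr j], rfl, rfl, single_temporal n _, by simp [pathEdges]⟩⟩


end TS
end

section
/- Let D = (A,B,λ) be an extremally matched temporal bi-clique with injective labeling λ and n = |A| = |B| ≥ 2, and let e = {a,b} ∈ A⊗B. Then D has a bi-spanner of size at most 4n − 4 + |M(e)|, where M(e) is the set of edges that are not e-reverted. -/
namespace TS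


lemma reaches_single {V L : Type} [LinearOrder L] (lab : Sym2 V → L) (S : Set (Sym2 V)) (u v : V)
    (h : s(u,v) ∈ S) : Reaches lab S u v := by
  refine ⟨[u,v], rfl, rfl, by simp, ?_, ?_⟩ <;> simp [pathEdges, h, List.Chain']

lemma reaches_quad {V L : Type} [LinearOrder L] (lab : Sym2 V → L) (S : Set (Sym2 V)) (u v w x : V)
    (h1 : s(u,v) ∈ S) (h2 : s(v,w) ∈ S) (h3 : s(w,x) ∈ S)
    (l1 : lab s(u,v) ≤ lab s(v,w)) (l2 : lab s(v,w) ≤ lab s(w,x)) :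
    Reaches lab S u x := by
  refine ⟨[u,v,w,x], rfl, rfl, by simp, ?_, ?_⟩ <;>
    simp [pathEdges, h1, h2, h3, l1, l2, List.Chain']

/-- an extremally matched bi-clique with injective labeling and
`n ≥ 2` vertices per side has, for every edge `e = {a,b}`, a bi-spanner of
size at most `4n − 4 + |M(e)|`, where `M(e)` is the set of edges that are not
`e`-reverted. -/
theorem stmt16 {α β : Type} [Fintype α] [Fintype β] (n : ℕ) (hn : 2 ≤ n)
    (hA : Fintype.card α = n) (hB : Fintype.card β = n)
    (lab : Sym2 (α ⊕ β) → ℕ) (hinj : Set.InjOn lab (bicliqueEdges α β))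
    (hEM : ExtremallyMatched lab) (a : α) (b : β) :
    ∃ S : Set (Sym2 (α ⊕ β)), IsBiSpanner lab S ∧
      S.ncard ≤ 4 * n - 4 + (MSet lab a b).ncard := by
  classical
  obtain ⟨⟨fm, gm, hfm, hgm, hgfm, hfgm⟩, ⟨fp, gp, hfp, hgp, hgfp, hfgp⟩⟩ := hEM
  -- injectivity on components
  have hpair : ∀ (x x' : α) (y y' : β),
      lab s(Sum.inl x, Sum.inr y) = lab s(Sum.inl x', Sum.inr y') → x = x' ∧ y = y' := by
    intro x x' y y' h
    have h2 := hinj ⟨x, y, rfl⟩ ⟨x', y', rfl⟩ h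
    rw [Sym2.eq_iff] at h2
    rcases h2 with ⟨h3, h4⟩ | ⟨h3, h4⟩
    · exact ⟨Sum.inl.inj h3, Sum.inr.inj h4⟩
    · exact absurd h3 (by simp)
  have hsw : ∀ x y : α ⊕ β, lab s(x, y) = lab s(y, x) := fun x y => by rw [Sym2.eq_swap]
  set δa : Set (Sym2 (α ⊕ β)) := Set.range (fun b' : β => s(Sum.inl a, Sum.inr b')) with hδa_def
  set δb : Set (Sym2 (α ⊕ β)) := Set.range (fun a' : α => s(Sum.inl a', Sum.inr b)) with hδb_def
  set Mm : Set (Sym2 (α ⊕ β)) := Set.range (fun a' : α => s(Sum.inl a', Sum.inr (fm a'))) with hMm_def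
  set Mp : Set (Sym2 (α ⊕ β)) := Set.range (fun b' : β => s(Sum.inl (gp b'), Sum.inr b')) with hMp_def
  refine ⟨δa ∪ δb ∪ Mm ∪ Mp ∪ MSet lab a b, ⟨?_, ?_⟩, ?_⟩
  · -- subset of biclique edges
    rintro x ((((⟨b', rfl⟩ | ⟨a', rfl⟩) | ⟨a', rfl⟩) | ⟨b', rfl⟩) | ⟨a', b', rfl, -⟩) <;>
      exact ⟨_, _, rfl⟩
  · -- reachability
    intro a' b'
    by_cases hrev : Reverted lab a b a' b'
    · rcases hrev with ⟨a'', ha'', hle⟩ | ⟨b'', hb'', hle⟩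
      · -- via b and the latest matching edge at b'
        have ha0 : a'' = gp b' := by
          have e1 : lab s(Sum.inl a'', Sum.inr b') = lab s(Sum.inl (gp b'), Sum.inr b') :=
            le_antisymm (hgp b' a'') (ha'' (gp b'))
          exact (hpair _ _ _ _ e1).1
        rw [ha0] at hle
        refine reaches_quad lab _ (Sum.inl a') (Sum.inr b) (Sum.inl (gp b')) (Sum.inr b')
          ?_ ?_ ?_ ?_ ?_
        · exact Or.inl (Or.inl (Or.inl (Or.inr ⟨a', rfl⟩)))
        · rw [Sym2.eq_swap]; exact Or.inl (Or.inl (Or.inl (Or.inr ⟨gp b', rfl⟩)))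
        · exact Or.inl (Or.inr ⟨b', rfl⟩)
        · rw [hsw (Sum.inr b) (Sum.inl (gp b'))]; exact hle
        · rw [hsw (Sum.inr b) (Sum.inl (gp b'))]
          have := hfp (gp b') b
          rwa [hfgp b'] at this
      · -- via the earliest matching edge at a' and star at a
        have hb0 : b'' = fm a' := by
          have e1 : lab s(Sum.inl a', Sum.inr b'') = lab s(Sum.inl a', Sum.inr (fm a')) :=
            le_antisymm (hb'' (fm a')) (hfm a' b'')
          exact (hpair _ _ _ _ e1).2
        rw [hb0] at hle
        refine reaches_quad lab _ (Sum.inl a') (Sum.inr (fm a')) (Sum.inl a) (Sum.inr b')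
          ?_ ?_ ?_ ?_ ?_
        · exact Or.inl (Or.inl (Or.inr ⟨a', rfl⟩))
        · rw [Sym2.eq_swap]; exact Or.inl (Or.inl (Or.inl (Or.inl ⟨fm a', rfl⟩)))
        · exact Or.inl (Or.inl (Or.inl (Or.inl ⟨b', rfl⟩)))
        · rw [hsw (Sum.inr (fm a')) (Sum.inl a)]
          have := hgm (fm a') a
          rwa [hgfm a'] at this
        · rw [hsw (Sum.inr (fm a')) (Sum.inl a)]; exact hle
    · exact reaches_single lab _ _ _ (Or.inr ⟨a', b', rfl, hrev⟩)
  · -- cardinality bound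
    have hsub : δa ∪ δb ∪ Mm ∪ Mp ∪ MSet lab a b ⊆
        δa ∪ ((δb \ δa) ∪ ((Mm \ (δa ∪ δb)) ∪ ((Mp \ (δa ∪ δb)) ∪ MSet lab a b))) := by
      intro x hx
      by_cases h1 : x ∈ δa
      · exact Or.inl h1
      by_cases h2 : x ∈ δb
      · exact Or.inr (Or.inl ⟨h2, h1⟩)
      rcases hx with ((((h | h) | h) | h) | h)
      · exact absurd h h1
      · exact absurd h h2
      · exact Or.inr (Or.inr (Or.inl ⟨h, by simp [h1, h2]⟩))
      · exact Or.inr (Or.inr (Or.inr (Or.inl ⟨h, by simp [h1, h2]⟩)))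
      · exact Or.inr (Or.inr (Or.inr (Or.inr h)))
    have hδa : δa.ncard ≤ n := by
      rw [hδa_def, ← Set.image_univ]
      calc ((fun b' : β => s(Sum.inl a, Sum.inr b')) '' Set.univ).ncard
          ≤ (Set.univ : Set β).ncard := Set.ncard_image_le
        _ = n := by rw [Set.ncard_univ, Nat.card_eq_fintype_card, hB]
    have hcard1 : (Set.univ \ {a} : Set α).ncard = n - 1 := by
      rw [Set.ncard_diff (Set.subset_univ _), Set.ncard_univ, Set.ncard_singleton, Nat.card_eq_fintype_card, hA]
    have hδb : (δb \ δa).ncard ≤ n - 1 := by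
      have hsub2 : δb \ δa ⊆ (fun a' : α => s(Sum.inl a', Sum.inr b)) '' (Set.univ \ {a}) := by
        rintro x ⟨⟨a', rfl⟩, hx⟩
        refine ⟨a', ⟨trivial, fun h => hx ?_⟩, rfl⟩
        simp only [Set.mem_singleton_iff] at h
        exact ⟨b, by rw [h]⟩
      calc (δb \ δa).ncard ≤ _ := Set.ncard_le_ncard hsub2 (Set.toFinite _)
        _ ≤ (Set.univ \ {a} : Set α).ncard := Set.ncard_image_le
        _ = n - 1 := hcard1
    -- bounds for the matchings
    have hMmsub : ∀ a0 : α, fm a0 = b →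
        Mm \ (δa ∪ δb) ⊆ (fun a' : α => s(Sum.inl a', Sum.inr (fm a'))) '' (Set.univ \ {a, a0}) := by
      intro a0 ha0
      rintro x ⟨⟨a', rfl⟩, hx⟩
      refine ⟨a', ⟨trivial, fun h => hx ?_⟩, rfl⟩
      simp only [Set.mem_insert_iff, Set.mem_singleton_iff] at h
      rcases h with rfl | rfl
      · exact Or.inl ⟨fm a', rfl⟩
      · exact Or.inr ⟨a', by simp [ha0]⟩
    have hMpsub : ∀ b0 : β, gp b0 = a →
        Mp \ (δa ∪ δb) ⊆ (fun b' : β => s(Sum.inl (gp b'), Sum.inr b')) '' (Set.univ \ {b, b0}) := by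
      intro b0 hb0
      rintro x ⟨⟨b', rfl⟩, hx⟩
      refine ⟨b', ⟨trivial, fun h => hx ?_⟩, rfl⟩
      simp only [Set.mem_insert_iff, Set.mem_singleton_iff] at h
      rcases h with rfl | rfl
      · exact Or.inr ⟨gp b', rfl⟩
      · exact Or.inl ⟨b', by simp [hb0]⟩
    have hnotboth : ¬ (fm a = b ∧ fp a = b) := by
      rintro ⟨h1, h2⟩
      obtain ⟨b2, hb2⟩ := Fintype.exists_ne_of_one_lt_card (by omega : 1 < Fintype.card β) b
      have l1 := hfm a b2
      have l2 := hfp a b2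
      rw [h1] at l1; rw [h2] at l2
      exact hb2 ((hpair _ _ _ _ (le_antisymm l2 l1)).2)
    have hgen : ∀ (γ : Type) [Fintype γ], Fintype.card γ = n → ∀ (u v : γ), u ≠ v →
        (Set.univ \ {u, v} : Set γ).ncard = n - 2 := by
      intro γ _ hγ u v huv
      rw [Set.ncard_diff (Set.subset_univ _), Set.ncard_univ, Set.ncard_pair huv, Nat.card_eq_fintype_card, hγ]
    have key : (Mm \ (δa ∪ δb)).ncard + (Mp \ (δa ∪ δb)).ncard ≤ 2 * n - 3 := by
      have b1 : ∀ a0 : α, fm a0 = b → a ≠ a0 → (Mm \ (δa ∪ δb)).ncard ≤ n - 2 := by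
        intro a0 ha0 hne
        calc (Mm \ (δa ∪ δb)).ncard ≤ _ :=
              Set.ncard_le_ncard (hMmsub a0 ha0) (Set.toFinite _)
          _ ≤ (Set.univ \ {a, a0} : Set α).ncard := Set.ncard_image_le
          _ = n - 2 := hgen α hA a a0 hne
      have b2 : ∀ b0 : β, gp b0 = a → b ≠ b0 → (Mp \ (δa ∪ δb)).ncard ≤ n - 2 := by
        intro b0 hb0 hne
        calc (Mp \ (δa ∪ δb)).ncard ≤ _ :=
              Set.ncard_le_ncard (hMpsub b0 hb0) (Set.toFinite _)
          _ ≤ (Set.univ \ {b, b0} : Set β).ncard := Set.ncard_image_le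
          _ = n - 2 := hgen β hB b b0 hne
      have b1' : (Mm \ (δa ∪ δb)).ncard ≤ n - 1 := by
        calc (Mm \ (δa ∪ δb)).ncard ≤ _ :=
              Set.ncard_le_ncard (hMmsub (gm b) (hfgm b)) (Set.toFinite _)
          _ ≤ (Set.univ \ {a, gm b} : Set α).ncard := Set.ncard_image_le
          _ ≤ (Set.univ \ {a} : Set α).ncard := by
              exact Set.ncard_le_ncard (Set.diff_subset_diff_right (by simp)) (Set.toFinite _)
          _ = n - 1 := hcard1
      have b2' : (Mp \ (δa ∪ δb)).ncard ≤ n - 1 := by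
        have hb1 : (Set.univ \ {b} : Set β).ncard = n - 1 := by
          rw [Set.ncard_diff (Set.subset_univ _), Set.ncard_univ, Set.ncard_singleton, Nat.card_eq_fintype_card, hB]
        calc (Mp \ (δa ∪ δb)).ncard ≤ _ :=
              Set.ncard_le_ncard (hMpsub (fp a) (hgfp a)) (Set.toFinite _)
          _ ≤ (Set.univ \ {b, fp a} : Set β).ncard := Set.ncard_image_le
          _ ≤ (Set.univ \ {b} : Set β).ncard := by
              exact Set.ncard_le_ncard (Set.diff_subset_diff_right (by simp)) (Set.toFinite _)
          _ = n - 1 := hb1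
      by_cases hm : fm a = b
      · -- then fp a ≠ b
        have hp : fp a ≠ b := fun h => hnotboth ⟨hm, h⟩
        have hne : b ≠ fp a := fun h => hp h.symm
        have := b2 (fp a) (hgfp a) hne
        omega
      · have hne : a ≠ gm b := by
          intro h
          exact hm (by rw [h, hfgm b])
        have := b1 (gm b) (hfgm b) hne
        omega
    have htot : (δa ∪ δb ∪ Mm ∪ Mp ∪ MSet lab a b).ncard ≤
        δa.ncard + ((δb \ δa).ncard + ((Mm \ (δa ∪ δb)).ncard +
          ((Mp \ (δa ∪ δb)).ncard + (MSet lab a b).ncard))) := by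
      calc (δa ∪ δb ∪ Mm ∪ Mp ∪ MSet lab a b).ncard ≤ _ :=
            Set.ncard_le_ncard hsub (Set.toFinite _)
        _ ≤ _ := le_trans (Set.ncard_union_le _ _) (by
            gcongr
            exact le_trans (Set.ncard_union_le _ _) (by
              gcongr
              exact le_trans (Set.ncard_union_le _ _) (by
                gcongr
                exact Set.ncard_union_le _ _)))
    omega


end TS
end

section
/- For every n ≥ 2, the shifted matching graph SM_n has a bi-spanner of size at most 4n − 4. -/
namespace TS


lemma reaches4 {V L : Type} [LinearOrder L] (lab : Sym2 V → L) (S : Set (Sym2 V)) (u x y v : V)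
    (h1 : s(u,x) ∈ S) (h2 : s(x,y) ∈ S) (h3 : s(y,v) ∈ S)
    (l1 : lab s(u,x) ≤ lab s(x,y)) (l2 : lab s(x,y) ≤ lab s(y,v)) :
    Reaches lab S u v := by
  refine ⟨[u,x,y,v], rfl, rfl, by simp, ?_, ?_⟩
  · simp only [pathEdges, List.zip, List.zipWith, List.map, List.tail]
    intro e he
    simp only [List.mem_cons, List.not_mem_nil, or_false] at he
    rcases he with h|h|h <;> subst h <;> assumption
  · simp only [pathEdges, List.zip, List.zipWith, List.map, List.tail]
    exact List.isChain_cons_cons.2 ⟨l1, List.isChain_cons_cons.2 ⟨l2, List.isChain_singleton _⟩⟩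

lemma mod_helper {n a b : ℕ} (hb : b < n) (hab : a ≤ b) : (n + b - a) % n = b - a := by
  have h : n + b - a = n + (b - a) := by omega
  rw [h, Nat.add_mod_left, Nat.mod_eq_of_lt (by omega)]

lemma mod_helper2 {n a b : ℕ} (ha : a < n) (hab : b < a) : (n + b - a) % n = n + b - a := by
  rw [Nat.mod_eq_of_lt (by omega)]

/-- for every `n ≥ 2`, the shifted matching graph `SM_n` has a
bi-spanner of size at most `4n − 4`. -/
theorem stmt17 (n : ℕ) (hn : 2 ≤ n) :
    ∃ S : Set (Sym2 (Fin n ⊕ Fin n)),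
      IsBiSpanner (smLab n) S ∧ S.ncard ≤ 4 * n - 4 := by
  classical
  haveI : NeZero n := ⟨by omega⟩
  set lst : Fin n := ⟨n - 1, by omega⟩ with hlst
  have hlstv : (lst : ℕ) = n - 1 := rfl
  have h0v : ((0 : Fin n) : ℕ) = 0 := rfl
  have hlst0 : lst ≠ 0 := by
    intro h; apply_fun Fin.val at h; simp [hlstv, h0v] at h; omega
  let F1 : Finset (Sym2 (Fin n ⊕ Fin n)) :=
    Finset.image (fun i : Fin n => s(Sum.inl i, Sum.inr i)) Finset.univ
  let F2 : Finset (Sym2 (Fin n ⊕ Fin n)) :=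
    Finset.image (fun j : Fin n => s(Sum.inl (0 : Fin n), Sum.inr j)) (Finset.univ.erase 0)
  let F3 : Finset (Sym2 (Fin n ⊕ Fin n)) :=
    Finset.image (fun i : Fin n => s(Sum.inl i, Sum.inr lst)) ((Finset.univ.erase 0).erase lst)
  let F4 : Finset (Sym2 (Fin n ⊕ Fin n)) :=
    Finset.image (fun j : Fin n => s(Sum.inl (j + 1), Sum.inr j)) (Finset.univ.erase lst)
  let F : Finset (Sym2 (Fin n ⊕ Fin n)) := F1 ∪ F2 ∪ F3 ∪ F4
  -- membership helpers
  have hm1 : ∀ i : Fin n, s(Sum.inl i, Sum.inr i) ∈ F := by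
    intro i
    have : s(Sum.inl i, Sum.inr i) ∈ F1 := Finset.mem_image.2 ⟨i, Finset.mem_univ i, rfl⟩
    simp only [F, Finset.mem_union]; tauto
  have hm2 : ∀ j : Fin n, s(Sum.inl (0 : Fin n), Sum.inr j) ∈ F := by
    intro j
    by_cases hj : j = 0
    · subst hj; exact hm1 0
    · have : s(Sum.inl (0 : Fin n), Sum.inr j) ∈ F2 :=
        Finset.mem_image.2 ⟨j, Finset.mem_erase.2 ⟨hj, Finset.mem_univ j⟩, rfl⟩
      simp only [F, Finset.mem_union]; tauto
  have hm3 : ∀ i : Fin n, s(Sum.inl i, Sum.inr lst) ∈ F := by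
    intro i
    by_cases hi0 : i = 0
    · subst hi0; exact hm2 lst
    by_cases hil : i = lst
    · subst hil; exact hm1 lst
    · have : s(Sum.inl i, Sum.inr lst) ∈ F3 :=
        Finset.mem_image.2 ⟨i, Finset.mem_erase.2 ⟨hil, Finset.mem_erase.2 ⟨hi0, Finset.mem_univ i⟩⟩, rfl⟩
      simp only [F, Finset.mem_union]; tauto
  have hm4 : ∀ j : Fin n, j ≠ lst → s(Sum.inl (j + 1), Sum.inr j) ∈ F := by
    intro j hj
    have : s(Sum.inl (j + 1), Sum.inr j) ∈ F4 :=
      Finset.mem_image.2 ⟨j, Finset.mem_erase.2 ⟨hj, Finset.mem_univ j⟩, rfl⟩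
    simp only [F, Finset.mem_union]; tauto
  refine ⟨(F : Set (Sym2 (Fin n ⊕ Fin n))), ⟨?_, ?_⟩, ?_⟩
  · -- subset of biclique edges
    intro e he
    simp only [Finset.coe_union, Set.mem_union, Finset.mem_coe, F, F1, F2, F3, F4,
      Finset.mem_union, Finset.mem_image] at he
    rcases he with ((⟨i, -, h⟩ | ⟨j, -, h⟩) | ⟨i, -, h⟩) | ⟨j, -, h⟩ <;>
      exact ⟨_, _, h.symm⟩
  · -- reachability
    intro i j
    by_cases hij : (i : ℕ) ≤ (j : ℕ)
    · -- path a_i, b_i, a_0, b_j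
      refine reaches4 _ _ _ (Sum.inr i) (Sum.inl (0 : Fin n)) _ (hm1 i) ?_ (hm2 j) ?_ ?_
      · rw [Sym2.eq_swap]; exact hm2 i
      · show (n + (i:ℕ) - (i:ℕ)) % n ≤ (n + (i:ℕ) - ((0:Fin n):ℕ)) % n
        rw [h0v, mod_helper i.isLt le_rfl, mod_helper i.isLt (Nat.zero_le _)]
        omega
      · show (n + (i:ℕ) - ((0:Fin n):ℕ)) % n ≤ (n + (j:ℕ) - ((0:Fin n):ℕ)) % n
        rw [h0v, mod_helper i.isLt (Nat.zero_le _), mod_helper j.isLt (Nat.zero_le _)]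
        omega
    · -- j < i : path a_i, b_{n-1}, a_{j+1}, b_j
      push_neg at hij
      have hjlt : (j : ℕ) < n - 1 := by have := i.isLt; omega
      have hjlst : j ≠ lst := by
        intro h; apply_fun Fin.val at h; rw [hlstv] at h; omega
      have hj1 : ((j + 1 : Fin n) : ℕ) = (j : ℕ) + 1 := by
        have h1 : ((1 : Fin n) : ℕ) = 1 := by
          rw [Fin.val_one']; exact Nat.mod_eq_of_lt (by omega)
        rw [Fin.val_add, h1, Nat.mod_eq_of_lt (by omega)]
      refine reaches4 _ _ _ (Sum.inr lst) (Sum.inl (j + 1)) _ (hm3 i) ?_ (hm4 j hjlst) ?_ ?_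
      · rw [Sym2.eq_swap]; exact hm3 (j + 1)
      · show (n + (lst:ℕ) - (i:ℕ)) % n ≤ (n + (lst:ℕ) - ((j+1 : Fin n):ℕ)) % n
        rw [hlstv, hj1, mod_helper (by omega) (by omega), mod_helper (by omega) (by omega)]
        omega
      · show (n + (lst:ℕ) - ((j+1 : Fin n):ℕ)) % n ≤ (n + (j:ℕ) - ((j+1 : Fin n):ℕ)) % n
        rw [hlstv, hj1, mod_helper (by omega) (by omega), mod_helper2 (by omega) (by omega)]
        omega
  · -- cardinality
    rw [Set.ncard_coe_finset]
    have c1 : F1.card ≤ n := le_trans Finset.card_image_le (by simp)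
    have c2 : F2.card ≤ n - 1 := by
      refine le_trans Finset.card_image_le ?_
      rw [Finset.card_erase_of_mem (Finset.mem_univ _)]; simp
    have c3 : F3.card ≤ n - 2 := by
      refine le_trans Finset.card_image_le ?_
      rw [Finset.card_erase_of_mem (Finset.mem_erase.2 ⟨hlst0, Finset.mem_univ _⟩),
        Finset.card_erase_of_mem (Finset.mem_univ _)]
      simp only [Finset.card_univ, Fintype.card_fin]
      omega
    have c4 : F4.card ≤ n - 1 := by
      refine le_trans Finset.card_image_le ?_
      rw [Finset.card_erase_of_mem (Finset.mem_univ _)]; simp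
    have := Finset.card_union_le (F1 ∪ F2 ∪ F3) F4
    have := Finset.card_union_le (F1 ∪ F2) F3
    have := Finset.card_union_le F1 F2
    simp only [F] at *
    omega


end TS
end

section
/- Let G = (A_G, B_G, λ_G) and H = (A_H, B_H, λ_H) be temporal bi-cliques with n_G = |A_G| = |B_G| and n_H = |A_H| = |B_H|, and let S_G be a bi-spanner of G and S_H a bi-spanner of H. Then the product graph G×H has a bi-spanner of size at most |S_G|·n_H + |S_H|·n_G. -/
namespace TS

/-- Underlying symmetric label function of the product graph `G × H`: the
edge `{(a_G,a_H), (b_G,b_H)}` gets the label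
`(λ_G({a_G,b_G}), λ_H({a_H,b_H}))`, compared lexicographically. -/
def prodFun {αG βG αH βH : Type}
    (labG : Sym2 (αG ⊕ βG) → ℕ) (labH : Sym2 (αH ⊕ βH) → ℕ) :
    (αG × αH ⊕ βG × βH) → (αG × αH ⊕ βG × βH) → Lex (ℕ × ℕ)
  | Sum.inl x, Sum.inr y =>
      toLex (labG s(Sum.inl x.1, Sum.inr y.1), labH s(Sum.inl x.2, Sum.inr y.2))
  | Sum.inr y, Sum.inl x =>
      toLex (labG s(Sum.inl x.1, Sum.inr y.1), labH s(Sum.inl x.2, Sum.inr y.2))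
  | _, _ => toLex (0, 0)

theorem prodFun_symm {αG βG αH βH : Type}
    (labG : Sym2 (αG ⊕ βG) → ℕ) (labH : Sym2 (αH ⊕ βH) → ℕ) :
    ∀ x y, prodFun labG labH x y = prodFun labG labH y x := by
  rintro (x | x) (y | y) <;> rfl

/-- The lexicographic labeling of the product graph `G × H`. -/
def prodLab {αG βG αH βH : Type}
    (labG : Sym2 (αG ⊕ βG) → ℕ) (labH : Sym2 (αH ⊕ βH) → ℕ) :
    Sym2 (αG × αH ⊕ βG × βH) → Lex (ℕ × ℕ) :=
  Sym2.lift ⟨prodFun labG labH, prodFun_symm labG labH⟩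

variable {V L : Type} [LinearOrder L]

variable {W : Type}

lemma pathEdges_cons₂ (a b : V) (l : List V) :
    pathEdges (a :: b :: l) = s(a, b) :: pathEdges (b :: l) := rfl

lemma pathEdges_map (f : V → W) (p : List V) :
    pathEdges (p.map f) = (pathEdges p).map (Sym2.map f) := by
  unfold pathEdges
  rw [← List.map_tail, List.zip_map, List.map_map, List.map_map]
  simp [Function.comp_def, Sym2.map_pair_eq]

lemma pathEdges_ne_nil {p : List V} {u v : V} (h1 : p.head? = some u)
    (h2 : p.getLast? = some v) (hne : u ≠ v) : pathEdges p ≠ [] := by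
  match p with
  | [] => simp at h1
  | [a] => simp at h1 h2; exact absurd (h1 ▸ h2) hne
  | a :: b :: l => rw [pathEdges_cons₂]; simp

lemma head?_pathEdges {p : List V} {u : V} (h1 : p.head? = some u)
    (hne : pathEdges p ≠ []) : ∃ w, (pathEdges p).head? = some s(u, w) := by
  match p with
  | [] => simp at h1
  | [a] => simp [pathEdges] at hne
  | a :: b :: l =>
    simp only [List.head?_cons, Option.some.injEq] at h1
    exact ⟨b, by rw [← h1, pathEdges_cons₂]; rfl⟩

lemma getLast?_pathEdges : ∀ {p : List V} {v : V}, p.getLast? = some v →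
    pathEdges p ≠ [] → ∃ w, (pathEdges p).getLast? = some s(w, v)
  | [], _, h, _ => by simp at h
  | [a], _, _, hne => by simp [pathEdges] at hne
  | a :: b :: l, v, h, _ => by
    rcases eq_or_ne l [] with rfl | hl
    · simp only [List.getLast?_cons_cons, List.getLast?_singleton,
        Option.some.injEq] at h
      exact ⟨a, by rw [← h]; rfl⟩
    · have hbl : (b :: l).getLast? = some v := by
        rwa [List.getLast?_cons_cons] at h
      have hpe : pathEdges (b :: l) ≠ [] := by
        obtain ⟨c, t, rfl⟩ := List.exists_cons_of_ne_nil hl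
        rw [pathEdges_cons₂]; simp
      obtain ⟨w, hw⟩ := getLast?_pathEdges hbl hpe
      refine ⟨w, ?_⟩
      obtain ⟨c, t, hct⟩ := List.exists_cons_of_ne_nil hpe
      rw [pathEdges_cons₂, hct, List.getLast?_cons_cons, ← hct, hw]

lemma pathEdges_append : ∀ (p : List V) (q : List V) (hp : p ≠ []) (hq : q ≠ []),
    pathEdges (p ++ q) = pathEdges p ++ s(p.getLast hp, q.head hq) :: pathEdges q
  | [], _, hp, _ => absurd rfl hp
  | [a], q, _, hq => by
    obtain ⟨c, t, rfl⟩ := List.exists_cons_of_ne_nil hq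
    simp [pathEdges_cons₂, pathEdges]
  | a :: b :: l, q, _, hq => by
    have h2 := pathEdges_append (b :: l) q (by simp) hq
    rw [show pathEdges (a :: b :: l ++ q) = s(a, b) :: pathEdges ((b :: l) ++ q)
        from rfl, h2, pathEdges_cons₂]
    simp [List.getLast_cons]

lemma lift {L' : Type} [LinearOrder L'] (f : V → W) (lab : Sym2 V → L)
    (lab' : Sym2 W → L') (S : Set (Sym2 V)) (S' : Set (Sym2 W))
    (hS : ∀ e ∈ S, Sym2.map f e ∈ S')
    (hmono : ∀ e ∈ S, ∀ e' ∈ S, lab e ≤ lab e' →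
      lab' (Sym2.map f e) ≤ lab' (Sym2.map f e'))
    {p : List V} (hp : IsTemporalPath lab S p) :
    IsTemporalPath lab' S' (p.map f) := by
  obtain ⟨hne, hmem, hch⟩ := hp
  refine ⟨by simpa using hne, ?_, ?_⟩
  · rw [pathEdges_map]
    rintro e he
    simp only [List.mem_map] at he
    obtain ⟨e', he', rfl⟩ := he
    exact hS _ (hmem _ he')
  · unfold List.Chain' at hch ⊢; rw [pathEdges_map, List.isChain_map]
    rw [List.isChain_iff_getElem] at hch ⊢
    intro i hi
    have h1 := hmem _ (List.getElem_mem (l := pathEdges p) (n := i) (by omega))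
    have h2 := hmem _ (List.getElem_mem (l := pathEdges p) (n := i + 1) (by omega))
    exact hmono _ h1 _ h2 (hch i hi)


lemma pathEdges_append' {p q : List V} {x y : V} (hx : p.getLast? = some x)
    (hy : q.head? = some y) :
    pathEdges (p ++ q) = pathEdges p ++ s(x, y) :: pathEdges q := by
  have hp : p ≠ [] := fun h => by rw [h] at hx; simp at hx
  have hq : q ≠ [] := fun h => by rw [h] at hy; simp at hy
  rw [pathEdges_append p q hp hq]
  rw [List.getLast?_eq_getLast hp, Option.some.injEq] at hx
  rw [List.head?_eq_head hq, Option.some.injEq] at hy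
  rw [hx, hy]

/-- if `G` and `H` are temporal bi-cliques of sizes `n_G` and
`n_H` with bi-spanners `S_G` and `S_H`, then the product graph `G × H` has a
bi-spanner of size at most `|S_G|·n_H + |S_H|·n_G`. -/
theorem stmt19 {αG βG αH βH : Type}
    [Fintype αG] [Fintype βG] [Fintype αH] [Fintype βH]
    (nG nH : ℕ) (hAG : Fintype.card αG = nG) (hBG : Fintype.card βG = nG)
    (hAH : Fintype.card αH = nH) (hBH : Fintype.card βH = nH)
    (labG : Sym2 (αG ⊕ βG) → ℕ) (labH : Sym2 (αH ⊕ βH) → ℕ)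
    (SG : Set (Sym2 (αG ⊕ βG))) (hSG : IsBiSpanner labG SG)
    (SH : Set (Sym2 (αH ⊕ βH))) (hSH : IsBiSpanner labH SH) :
    ∃ S : Set (Sym2 (αG × αH ⊕ βG × βH)),
      IsBiSpanner (prodLab labG labH) S ∧
      S.ncard ≤ SG.ncard * nH + SH.ncard * nG := by
  classical
  set lab' := prodLab labG labH with hlabdef
  have lexmono : ∀ {x y : ℕ × ℕ}, x.1 ≤ y.1 → x.2 ≤ y.2 → toLex x ≤ toLex y :=
    fun h1 h2 => Prod.Lex.toLex_mono ⟨h1, h2⟩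
  by_cases hA : Nonempty (αG × αH)
  swap
  · exact ⟨∅, ⟨Set.empty_subset _, fun a b => absurd ⟨a⟩ hA⟩, by simp⟩
  by_cases hB : Nonempty (βG × βH)
  swap
  · exact ⟨∅, ⟨Set.empty_subset _, fun a b => absurd ⟨b⟩ hB⟩, by simp⟩
  obtain ⟨⟨aG0, aH0⟩⟩ := hA
  obtain ⟨⟨bG0, bH0⟩⟩ := hB
  haveI : Nonempty αG := ⟨aG0⟩
  haveI : Nonempty βH := ⟨bH0⟩
  -- earliest product-neighbour on the H side
  have hm : ∀ u : αH, ∃ b : βH, ∀ b' : βH,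
      labH s(Sum.inl u, Sum.inr b) ≤ labH s(Sum.inl u, Sum.inr b') := by
    intro u
    obtain ⟨b, -, hb⟩ := Finset.exists_min_image Finset.univ
      (fun b : βH => labH s(Sum.inl u, Sum.inr b)) Finset.univ_nonempty
    exact ⟨b, fun b' => hb b' (Finset.mem_univ _)⟩
  choose m hm using hm
  -- latest SG-neighbour of each b : βG
  have hpneig : ∀ b : βG, ∃ a : αG, s(Sum.inl a, Sum.inr b) ∈ SG := by
    intro b
    obtain ⟨p, hh, hl, hT⟩ := hSG.2 aG0 b
    have hpe := pathEdges_ne_nil hh hl (by simp)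
    obtain ⟨w, hw⟩ := getLast?_pathEdges hl hpe
    have hmem : s(w, Sum.inr b) ∈ SG :=
      hT.2.1 _ (List.mem_of_mem_getLast? (by rw [hw]; rfl))
    obtain ⟨a', b', hab⟩ := hSG.1 hmem
    rw [Sym2.eq_iff] at hab
    rcases hab with ⟨hw1, hb1⟩ | ⟨hw1, hb1⟩
    · refine ⟨a', ?_⟩
      obtain rfl : b' = b := by injection hb1.symm
      rwa [hw1] at hmem
    · exact absurd hb1 (by simp)
  have hpf : ∀ b : βG, ∃ a : αG, s(Sum.inl a, Sum.inr b) ∈ SG ∧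
      ∀ a' : αG, s(Sum.inl a', Sum.inr b) ∈ SG →
        labG s(Sum.inl a', Sum.inr b) ≤ labG s(Sum.inl a, Sum.inr b) := by
    intro b
    obtain ⟨a0, ha0⟩ := hpneig b
    obtain ⟨a, ha, hmax⟩ := Finset.exists_max_image
      (Finset.univ.filter fun a : αG => s(Sum.inl a, Sum.inr b) ∈ SG)
      (fun a => labG s(Sum.inl a, Sum.inr b)) ⟨a0, by simp [ha0]⟩
    exact ⟨a, (Finset.mem_filter.1 ha).2, fun a' ha' => hmax a' (by simp [ha'])⟩
  choose pf hpf1 hpf2 using hpf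
  -- the two lifting maps
  set Φ1 : αH → (αG ⊕ βG) → (αG × αH ⊕ βG × βH) := fun u =>
    Sum.elim (fun a => Sum.inl (a, u)) (fun b => Sum.inr (b, m u)) with hΦ1
  set Φ2 : βG → (αH ⊕ βH) → (αG × αH ⊕ βG × βH) := fun bg =>
    Sum.elim (fun u => Sum.inl (pf bg, u)) (fun w => Sum.inr (bg, w)) with hΦ2
  set S1 : Set (Sym2 (αG × αH ⊕ βG × βH)) :=
    (fun q : Sym2 (αG ⊕ βG) × αH => Sym2.map (Φ1 q.2) q.1) '' (SG ×ˢ Set.univ) with hS1def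
  set S2 : Set (Sym2 (αG × αH ⊕ βG × βH)) :=
    (fun q : Sym2 (αH ⊕ βH) × βG => Sym2.map (Φ2 q.2) q.1) '' (SH ×ˢ Set.univ) with hS2def
  have hev1 : ∀ (a : αG) (b : βG) (u : αH),
      Sym2.map (Φ1 u) s(Sum.inl a, Sum.inr b) = s(Sum.inl (a, u), Sum.inr (b, m u)) :=
    fun a b u => by rw [Sym2.map_pair_eq]; rfl
  have hev2 : ∀ (u : αH) (w : βH) (bg : βG),
      Sym2.map (Φ2 bg) s(Sum.inl u, Sum.inr w) = s(Sum.inl (pf bg, u), Sum.inr (bg, w)) :=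
    fun u w bg => by rw [Sym2.map_pair_eq]; rfl
  have hlab : ∀ (a : αG) (b : βG) (u : αH) (w : βH),
      lab' s(Sum.inl (a, u), Sum.inr (b, w)) =
        toLex (labG s(Sum.inl a, Sum.inr b), labH s(Sum.inl u, Sum.inr w)) :=
    fun a b u w => rfl
  refine ⟨S1 ∪ S2, ⟨?_, ?_⟩, ?_⟩
  · -- subset of biclique edges
    rintro e (⟨⟨e', u⟩, ⟨he', -⟩, rfl⟩ | ⟨⟨e', bg⟩, ⟨he', -⟩, rfl⟩)
    · obtain ⟨a, b, rfl⟩ := hSG.1 he'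
      exact ⟨(a, u), (b, m u), (hev1 a b u).symm ▸ rfl⟩
    · obtain ⟨a, b, rfl⟩ := hSH.1 he'
      exact ⟨(pf bg, a), (bg, b), (hev2 a b bg).symm ▸ rfl⟩
  · -- reachability
    rintro ⟨aG, aH⟩ ⟨bG, bH⟩
    obtain ⟨pG, hGh, hGl, hGT⟩ := hSG.2 aG bG
    obtain ⟨pH, hHh, hHl, hHT⟩ := hSH.2 aH bH
    have hGpe : pathEdges pG ≠ [] := pathEdges_ne_nil hGh hGl (by simp)
    have hHpe : pathEdges pH ≠ [] := pathEdges_ne_nil hHh hHl (by simp)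
    set P1 := pG.map (Φ1 aH) with hP1def
    set P2 := pH.map (Φ2 bG) with hP2def
    have hT1 : IsTemporalPath lab' (S1 ∪ S2) P1 := by
      refine lift (Φ1 aH) labG lab' SG _ (fun e he => Or.inl ⟨(e, aH), ⟨he, trivial⟩, rfl⟩)
        ?_ hGT
      intro e he e' he' hle
      obtain ⟨a, b, rfl⟩ := hSG.1 he
      obtain ⟨a', b', rfl⟩ := hSG.1 he'
      rw [hev1, hev1, hlab, hlab]
      exact lexmono hle le_rfl
    have hT2 : IsTemporalPath lab' (S1 ∪ S2) P2 := by
      refine lift (Φ2 bG) labH lab' SH _ (fun e he => Or.inr ⟨(e, bG), ⟨he, trivial⟩, rfl⟩)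
        ?_ hHT
      intro e he e' he' hle
      obtain ⟨a, b, rfl⟩ := hSH.1 he
      obtain ⟨a', b', rfl⟩ := hSH.1 he'
      rw [hev2, hev2, hlab, hlab]
      exact lexmono le_rfl hle
    have hP1h : P1.head? = some (Sum.inl (aG, aH)) := by
      rw [hP1def, List.head?_map, hGh]; rfl
    have hP1l : P1.getLast? = some (Sum.inr (bG, m aH)) := by
      rw [hP1def, List.getLast?_map, hGl]; rfl
    have hP2h : P2.head? = some (Sum.inl (pf bG, aH)) := by
      rw [hP2def, List.head?_map, hHh]; rfl
    have hP2l : P2.getLast? = some (Sum.inr (bG, bH)) := by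
      rw [hP2def, List.getLast?_map, hHl]; rfl
    have hP1ne : P1 ≠ [] := fun h => by rw [h] at hP1h; simp at hP1h
    have hP2ne : P2 ≠ [] := fun h => by rw [h] at hP2h; simp at hP2h
    set br : Sym2 (αG × αH ⊕ βG × βH) :=
      s(Sum.inr (bG, m aH), Sum.inl (pf bG, aH)) with hbrdef
    have hbr : br ∈ S1 ∪ S2 := by
      refine Or.inl ⟨(s(Sum.inl (pf bG), Sum.inr bG), aH), ⟨hpf1 bG, trivial⟩, ?_⟩
      show Sym2.map (Φ1 aH) s(Sum.inl (pf bG), Sum.inr bG) = br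
      rw [hev1, hbrdef]
      exact Sym2.eq_swap
    have hbrlab : lab' br =
        toLex (labG s(Sum.inl (pf bG), Sum.inr bG), labH s(Sum.inl aH, Sum.inr (m aH))) := by
      rw [hbrdef, Sym2.eq_swap, hlab]
    have hdec : pathEdges (P1 ++ P2) = pathEdges P1 ++ br :: pathEdges P2 :=
      pathEdges_append' hP1l hP2h
    refine ⟨P1 ++ P2, ?_, ?_, ?_, ?_, ?_⟩
    · rw [List.head?_append, hP1h]; rfl
    · rw [List.getLast?_append, hP2l]; rfl
    · exact fun h => hP1ne (List.append_eq_nil_iff.1 h).1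
    · rw [hdec]
      intro e he
      rcases List.mem_append.1 he with h | h
      · exact hT1.2.1 _ h
      · rcases List.mem_cons.1 h with rfl | h
        · exact hbr
        · exact hT2.2.1 _ h
    · unfold List.Chain'; rw [hdec, List.isChain_append]
      refine ⟨hT1.2.2, ?_, ?_⟩
      · rw [List.isChain_cons]
        refine ⟨?_, hT2.2.2⟩
        intro y hy
        obtain ⟨w, hw⟩ := head?_pathEdges hHh hHpe
        have hmem : s(Sum.inl aH, w) ∈ SH :=
          hHT.2.1 _ (List.mem_of_mem_head? (by rw [hw]; rfl))
        obtain ⟨a', b', hab⟩ := hSH.1 hmem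
        rw [Sym2.eq_iff] at hab
        rcases hab with ⟨ha1, hb1⟩ | ⟨ha1, hb1⟩
        · obtain rfl : aH = a' := by injection ha1
          subst hb1
          rw [hP2def, pathEdges_map, List.head?_map, hw] at hy
          rw [Option.mem_def, Option.map_some] at hy
          obtain rfl := Option.some.inj hy
          rw [hev2, hlab, hbrlab]
          exact lexmono le_rfl (hm aH b')
        · exact absurd ha1 (by simp)
      · intro x hx y hy
        obtain rfl : y = br := by
          simp only [List.head?_cons, Option.mem_def, Option.some.injEq] at hy
          exact hy.symm
        obtain ⟨w, hw⟩ := getLast?_pathEdges hGl hGpe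
        have hmem : s(w, Sum.inr bG) ∈ SG :=
          hGT.2.1 _ (List.mem_of_mem_getLast? (by rw [hw]; rfl))
        obtain ⟨a', b', hab⟩ := hSG.1 hmem
        rw [Sym2.eq_iff] at hab
        rcases hab with ⟨ha1, hb1⟩ | ⟨ha1, hb1⟩
        · obtain rfl : bG = b' := by injection hb1
          subst ha1
          rw [hP1def, pathEdges_map, List.getLast?_map, hw] at hx
          rw [Option.mem_def, Option.map_some] at hx
          obtain rfl := Option.some.inj hx
          rw [hev1, hlab, hbrlab]
          have := hpf2 bG a' hmem
          exact lexmono this le_rfl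
        · exact absurd hb1 (by simp)
  · -- cardinality
    have h1 : S1.ncard ≤ SG.ncard * nH := by
      calc S1.ncard ≤ (SG ×ˢ (Set.univ : Set αH)).ncard :=
            Set.ncard_image_le (Set.toFinite _)
        _ = SG.ncard * (Set.univ : Set αH).ncard := by
            rw [← Nat.card_coe_set_eq, ← Nat.card_coe_set_eq,
              ← Nat.card_coe_set_eq, Nat.card_congr (Equiv.Set.prod _ _),
              Nat.card_prod]
        _ = SG.ncard * nH := by rw [Set.ncard_univ, Nat.card_eq_fintype_card, hAH]
    have h2 : S2.ncard ≤ SH.ncard * nG := by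
      calc S2.ncard ≤ (SH ×ˢ (Set.univ : Set βG)).ncard :=
            Set.ncard_image_le (Set.toFinite _)
        _ = SH.ncard * (Set.univ : Set βG).ncard := by
            rw [← Nat.card_coe_set_eq, ← Nat.card_coe_set_eq,
              ← Nat.card_coe_set_eq, Nat.card_congr (Equiv.Set.prod _ _),
              Nat.card_prod]
        _ = SH.ncard * nG := by rw [Set.ncard_univ, Nat.card_eq_fintype_card, hBG]
    calc (S1 ∪ S2).ncard ≤ S1.ncard + S2.ncard := Set.ncard_union_le _ _
      _ ≤ SG.ncard * nH + SH.ncard * nG := Nat.add_le_add h1 h2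


end TS
end
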